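/- Convergence of soft rank to hard rank: For s ∈ ℝⁿ with distinct entries, the soft rank r̃_ε(s) = proj_{P(τ)}(-s/ε) converges to rank(s) as ε → 0⁺, where rank(s) is the vector of descending ranks of s. -/

import Mathlib

/-- The permutahedron generated by `(1, …, n)`, inside Euclidean space `ℝⁿ`. -/
def permutahedron (n : ℕ) : Set (EuclideanSpace ℝ (Fin n)) :=
  convexHull ℝ {x | ∃ σ : Equiv.Perm (Fin n), ∀ i, x i = ((σ i : ℕ) : ℝ) + 1}

/-- The descending rank vector of `s`: `rankVec s i` is the position of `s i` in the
descending sort of `s`. -/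
noncomputable def rankVec {n : ℕ} (s : EuclideanSpace ℝ (Fin n)) :
    EuclideanSpace ℝ (Fin n) :=
  WithLp.toLp 2 (fun i => ((Finset.univ.filter fun j : Fin n => s i ≤ s j).card : ℝ))

namespace SoftRankAux

variable {n : ℕ} {s : EuclideanSpace ℝ (Fin n)}

/-- count of j with s i ≤ s j -/
noncomputable def cnt (s : EuclideanSpace ℝ (Fin n)) (i : Fin n) : ℕ :=
  (Finset.univ.filter fun j : Fin n => s i ≤ s j).card

lemma cnt_pos (i : Fin n) : 0 < cnt s i :=
  Finset.card_pos.2 ⟨i, by simp [cnt]⟩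

lemma cnt_le (i : Fin n) : cnt s i ≤ n :=
  le_trans (Finset.card_filter_le _ _) (by simp)

lemma cnt_lt_cnt {i j : Fin n} (h : s i < s j) : cnt s j < cnt s i := by
  apply Finset.card_lt_card
  constructor
  · intro k hk
    simp only [Finset.mem_filter, Finset.mem_univ, true_and] at *
    exact h.le.trans hk
  · intro hsub
    have hi : i ∈ Finset.univ.filter fun k : Fin n => s i ≤ s k := by simp
    have := hsub hi
    simp only [Finset.mem_filter, Finset.mem_univ, true_and] at this
    exact absurd this (not_le.2 h)

lemma cnt_inj (hs : Function.Injective s) : Function.Injective (cnt s) := by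
  intro i j hij
  by_contra hne
  rcases lt_or_gt_of_ne (fun h : s i = s j => hne (hs h)) with h | h
  · exact absurd hij (Nat.ne_of_gt (cnt_lt_cnt h))
  · exact absurd hij.symm (Nat.ne_of_gt (cnt_lt_cnt h))

/-- `cnt s i = 1 + #{j | s i < s j}` -/
lemma cnt_eq (hs : Function.Injective s) (i : Fin n) :
    cnt s i = (Finset.univ.filter fun j : Fin n => s i < s j).card + 1 := by
  have : (Finset.univ.filter fun j : Fin n => s i ≤ s j)
      = insert i (Finset.univ.filter fun j : Fin n => s i < s j) := by
    ext k
    simp only [Finset.mem_filter, Finset.mem_univ, true_and, Finset.mem_insert]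
    constructor
    · intro hk
      rcases eq_or_lt_of_le hk with h | h
      · exact Or.inl (hs h.symm)
      · exact Or.inr h
    · rintro (rfl | h)
      · exact le_refl _
      · exact h.le
  rw [cnt, this, Finset.card_insert_of_notMem (by simp)]

/-- The ranking function, as a map `Fin n → Fin n`. -/
noncomputable def rho (s : EuclideanSpace ℝ (Fin n)) (i : Fin n) : Fin n :=
  ⟨cnt s i - 1, by have h1 := cnt_pos (s := s) i; have h2 := cnt_le (s := s) i; omega⟩

lemma rho_bij (hs : Function.Injective s) : Function.Bijective (rho s) := by
  rw [← Finite.injective_iff_bijective]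
  intro i j hij
  apply cnt_inj hs
  have h1 := cnt_pos (s := s) i
  have h2 := cnt_pos (s := s) j
  have := congrArg Fin.val hij
  simp only [rho] at this
  omega

/-- The rank permutation. -/
noncomputable def rhoPerm (s : EuclideanSpace ℝ (Fin n)) (hs : Function.Injective s) :
    Equiv.Perm (Fin n) := Equiv.ofBijective (rho s) (rho_bij hs)

lemma rankVec_eq (hs : Function.Injective s) (i : Fin n) :
    rankVec s i = ((rhoPerm s hs i : ℕ) : ℝ) + 1 := by
  have h1 := cnt_pos (s := s) i
  simp only [rankVec, PiLp.toLp_apply, rhoPerm, Equiv.ofBijective_apply, rho]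
  push_cast [Nat.cast_sub h1]
  ring_nf
  rfl

end SoftRankAux

namespace SoftRankAux

variable {n : ℕ} {s : EuclideanSpace ℝ (Fin n)}

lemma antivary_rho (hs : Function.Injective s) :
    Antivary s (fun i => ((rho s i : ℕ) : ℝ)) := by
  intro i j hij
  simp only [Nat.cast_lt] at hij
  have hcnt : cnt s i < cnt s j := by
    have h1 := cnt_pos (s := s) i
    have h2 := cnt_pos (s := s) j
    simp only [rho] at hij
    omega
  rcases lt_trichotomy (s i) (s j) with h | h | h
  · exact absurd hcnt (not_lt.2 (cnt_lt_cnt h).le)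
  · exact h.ge
  · exact h.le

lemma card_filter_perm_lt (σ : Equiv.Perm (Fin n)) (i : Fin n) :
    (Finset.univ.filter fun j : Fin n => σ j < σ i).card = (σ i : ℕ) := by
  have : (Finset.univ.filter fun j : Fin n => σ j < σ i).card
      = (Finset.univ.filter fun k : Fin n => k < σ i).card := by
    apply Finset.card_bij (fun a _ => σ a)
    · intro a ha; simp only [Finset.mem_filter, Finset.mem_univ, true_and] at *; exact ha
    · intro a _ b _ hab; exact σ.injective hab
    · intro b hb
      refine ⟨σ.symm b, ?_, by simp⟩
      simp only [Finset.mem_filter, Finset.mem_univ, true_and, Equiv.apply_symm_apply] at *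
      exact hb
  rw [this]
  have : (Finset.univ.filter fun k : Fin n => k < σ i) = Finset.Iio (σ i) := by
    ext k; simp
  rw [this, Fin.card_Iio]

lemma antivary_unique (hs : Function.Injective s) (σ : Equiv.Perm (Fin n))
    (hA : Antivary s (fun i => ((σ i : ℕ) : ℝ))) : σ = rhoPerm s hs := by
  ext i
  have hset : (Finset.univ.filter fun j : Fin n => σ j < σ i)
      = (Finset.univ.filter fun j : Fin n => s i < s j) := by
    ext j
    simp only [Finset.mem_filter, Finset.mem_univ, true_and]
    constructor
    · intro hj
      have hle : s i ≤ s j := hA (show ((σ j : ℕ) : ℝ) < ((σ i : ℕ) : ℝ) by exact_mod_cast hj)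
      have hne : j ≠ i := by rintro rfl; exact lt_irrefl _ hj
      exact lt_of_le_of_ne hle (fun h => hne (hs h.symm))
    · intro hj
      rcases lt_trichotomy (σ j) (σ i) with h | h | h
      · exact h
      · exfalso
        have hji : j = i := σ.injective h
        rw [hji] at hj
        exact lt_irrefl _ hj
      · exact absurd (hA (show ((σ i : ℕ) : ℝ) < ((σ j : ℕ) : ℝ) by exact_mod_cast h))
          (not_le.2 hj)
  have h1 := card_filter_perm_lt σ i
  rw [hset] at h1
  have h2 := cnt_eq hs i
  show (σ i : ℕ) = ((rhoPerm s hs i : Fin n) : ℕ)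
  simp only [rhoPerm, Equiv.ofBijective_apply, rho]
  omega

/-- Strict rearrangement: any permutation other than the rank permutation gives a
strictly larger value of `∑ s i * (σ i + 1)`. -/
lemma sum_rho_lt (hs : Function.Injective s) (σ : Equiv.Perm (Fin n))
    (hσ : σ ≠ rhoPerm s hs) :
    (∑ i, s i * ((rhoPerm s hs i : ℕ) : ℝ)) < ∑ i, s i * ((σ i : ℕ) : ℝ) := by
  set g : Fin n → ℝ := fun i => ((rhoPerm s hs i : ℕ) : ℝ) with hg
  have hA : Antivary s g := antivary_rho hs
  set π : Equiv.Perm (Fin n) := σ.trans (rhoPerm s hs).symm with hπ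
  have hgπ : ∀ i, g (π i) = ((σ i : ℕ) : ℝ) := by
    intro i; simp [hg, hπ]
  have := (hA.sum_mul_lt_sum_mul_comp_perm_iff (σ := π)).mpr ?_
  · simpa only [smul_eq_mul, hgπ] using this
  · intro hcon
    apply hσ
    apply antivary_unique hs
    have : (g ∘ π) = fun i => ((σ i : ℕ) : ℝ) := funext hgπ
    rwa [this] at hcon

end SoftRankAux

namespace SoftRankAux

variable {n : ℕ} {s : EuclideanSpace ℝ (Fin n)}

/-- The vertex set of the permutahedron. -/
def verts (n : ℕ) : Set (EuclideanSpace ℝ (Fin n)) :=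
  {x | ∃ σ : Equiv.Perm (Fin n), ∀ i, x i = ((σ i : ℕ) : ℝ) + 1}

lemma permutahedron_eq (n : ℕ) : permutahedron n = convexHull ℝ (verts n) := rfl

lemma inner_eq (x y : EuclideanSpace ℝ (Fin n)) :
    (inner ℝ x y : ℝ) = ∑ i, x i * y i := by
  simp [PiLp.inner_apply, RCLike.inner_apply, mul_comm]

lemma rankVec_mem (hs : Function.Injective s) : rankVec s ∈ verts n :=
  ⟨rhoPerm s hs, rankVec_eq hs⟩

lemma verts_norm_le {x : EuclideanSpace ℝ (Fin n)} (hx : x ∈ verts n) :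
    ‖x‖ ≤ (n : ℝ) ^ 2 := by
  obtain ⟨σ, hσ⟩ := hx
  rw [EuclideanSpace.norm_eq]
  have hbound : ∀ i, ‖x i‖ ^ 2 ≤ (n : ℝ) ^ 2 := by
    intro i
    rw [hσ i]
    have h1 : (0 : ℝ) ≤ ((σ i : ℕ) : ℝ) + 1 := by positivity
    have h2 : ((σ i : ℕ) : ℝ) + 1 ≤ (n : ℝ) := by
      have := (σ i).isLt
      exact_mod_cast this
    rw [Real.norm_eq_abs, abs_of_nonneg h1]
    nlinarith [Nat.cast_nonneg (α := ℝ) n]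
  have hsum : ∑ i, ‖x i‖ ^ 2 ≤ (n : ℝ) * (n : ℝ) ^ 2 := by
    calc ∑ i, ‖x i‖ ^ 2 ≤ ∑ _i : Fin n, (n : ℝ) ^ 2 :=
          Finset.sum_le_sum fun i _ => hbound i
      _ = (n : ℝ) * (n : ℝ) ^ 2 := by simp [mul_comm]
  have hpow : (n : ℝ) * (n : ℝ) ^ 2 ≤ ((n : ℝ) ^ 2) ^ 2 := by
    rcases Nat.eq_zero_or_pos n with h | h
    · subst h; norm_num
    · have h1 : (1 : ℝ) ≤ (n : ℝ) := by exact_mod_cast h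
      nlinarith
  calc Real.sqrt (∑ i, ‖x i‖ ^ 2) ≤ Real.sqrt (((n : ℝ) ^ 2) ^ 2) :=
        Real.sqrt_le_sqrt (le_trans hsum hpow)
    _ = (n : ℝ) ^ 2 := Real.sqrt_sq (by positivity)

lemma permutahedron_norm_le {x : EuclideanSpace ℝ (Fin n)} (hx : x ∈ permutahedron n) :
    ‖x‖ ≤ (n : ℝ) ^ 2 := by
  have hsub : verts n ⊆ Metric.closedBall (0 : EuclideanSpace ℝ (Fin n)) ((n : ℝ) ^ 2) := by
    intro y hy
    rw [Metric.mem_closedBall, dist_zero_right]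
    exact verts_norm_le hy
  have := convexHull_min hsub (convex_closedBall _ _) hx
  rwa [Metric.mem_closedBall, dist_zero_right] at this

/-- Sharp linear separation: the rank vector is the unique minimizer of `⟪s, ·⟫` on the
permutahedron, quantitatively. -/
lemma gap_lemma (hs : Function.Injective s) :
    ∃ c : ℝ, 0 < c ∧ ∀ y ∈ permutahedron n,
      c * ‖y - rankVec s‖ ≤ (inner ℝ s y : ℝ) - (inner ℝ s (rankVec s) : ℝ) := by
  classical
  set ρ : Equiv.Perm (Fin n) := rhoPerm s hs with hρ
  set v : EuclideanSpace ℝ (Fin n) := rankVec s with hv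
  have hvv : ∀ i, v i = ((ρ i : ℕ) : ℝ) + 1 := rankVec_eq hs
  set F : Equiv.Perm (Fin n) → ℝ := fun σ => ∑ i, s i * (((σ i : ℕ) : ℝ) + 1) with hF
  have hinnerF : ∀ (σ : Equiv.Perm (Fin n)) (x : EuclideanSpace ℝ (Fin n)),
      (∀ i, x i = ((σ i : ℕ) : ℝ) + 1) → (inner ℝ s x : ℝ) = F σ := by
    intro σ x hx
    rw [inner_eq]
    exact Finset.sum_congr rfl fun i _ => by rw [hx i]
  have hFlt : ∀ σ : Equiv.Perm (Fin n), σ ≠ ρ → F ρ < F σ := by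
    intro σ hσ
    have := sum_rho_lt hs σ hσ
    simp only [hF, mul_add, mul_one, Finset.sum_add_distrib]
    linarith
  by_cases hne : (Finset.univ.erase ρ : Finset (Equiv.Perm (Fin n))).Nonempty
  · set gap : ℝ := (Finset.univ.erase ρ).inf' hne F - F ρ with hgap
    have hgap_pos : 0 < gap := by
      rw [hgap, sub_pos, Finset.lt_inf'_iff]
      intro σ hσ
      exact hFlt σ (Finset.ne_of_mem_erase hσ)
    set D : ℝ := 2 * (n : ℝ) ^ 2 + 1 with hD
    have hD_pos : 0 < D := by positivity
    set c : ℝ := gap / D with hc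
    have hc_pos : 0 < c := div_pos hgap_pos hD_pos
    refine ⟨c, hc_pos, ?_⟩
    set f : EuclideanSpace ℝ (Fin n) → ℝ :=
      fun y => c * ‖y - v‖ - ((inner ℝ s y : ℝ) - (inner ℝ s v : ℝ)) with hf
    have hconv : ConvexOn ℝ Set.univ f := by
      refine ⟨convex_univ, fun x _ y _ a b ha hb hab => ?_⟩
      have hxy : a • x + b • y - v = a • (x - v) + b • (y - v) := by
        have h2 : a • (x - v) + b • (y - v) = a • x + b • y - (a + b) • v := by
          rw [smul_sub, smul_sub, add_smul]; abel
        rw [h2, hab, one_smul]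
      have hnorm : ‖a • x + b • y - v‖ ≤ a * ‖x - v‖ + b * ‖y - v‖ := by
        rw [hxy]
        calc ‖a • (x - v) + b • (y - v)‖ ≤ ‖a • (x - v)‖ + ‖b • (y - v)‖ := norm_add_le _ _
          _ = a * ‖x - v‖ + b * ‖y - v‖ := by
              rw [norm_smul, norm_smul, Real.norm_eq_abs, Real.norm_eq_abs,
                abs_of_nonneg ha, abs_of_nonneg hb]
      have hinner : (inner ℝ s (a • x + b • y) : ℝ)
          = a * (inner ℝ s x : ℝ) + b * (inner ℝ s y : ℝ) := by
        rw [inner_add_right, real_inner_smul_right, real_inner_smul_right]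
      have hmul := mul_le_mul_of_nonneg_left hnorm hc_pos.le
      have hIv : a * (inner ℝ s v : ℝ) + b * (inner ℝ s v : ℝ) = (inner ℝ s v : ℝ) := by
        rw [← add_mul, hab, one_mul]
      simp only [hf, smul_eq_mul, hinner]
      linarith [hmul, hIv]
    have hV : ∀ x ∈ verts n, f x ≤ 0 := by
      rintro x ⟨σ, hσ⟩
      by_cases hσρ : σ = ρ
      · have hxv : x = v := by
          ext i
          rw [hσ i, hσρ, hvv i]
        simp [hf, hxv]
      · have h1 : (inner ℝ s x : ℝ) = F σ := hinnerF σ x hσ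
        have h2 : (inner ℝ s v : ℝ) = F ρ := hinnerF ρ v hvv
        have h3 : F ρ + gap ≤ F σ := by
          have := Finset.inf'_le F (Finset.mem_erase.2 ⟨hσρ, Finset.mem_univ σ⟩)
          rw [hgap]; linarith
        have h4 : ‖x - v‖ ≤ D := by
          have hx' : ‖x‖ ≤ (n : ℝ) ^ 2 := verts_norm_le ⟨σ, hσ⟩
          have hv' : ‖v‖ ≤ (n : ℝ) ^ 2 := verts_norm_le (rankVec_mem hs)
          calc ‖x - v‖ ≤ ‖x‖ + ‖v‖ := norm_sub_le _ _
            _ ≤ D := by rw [hD]; linarith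
        have h5 : c * ‖x - v‖ ≤ gap := by
          calc c * ‖x - v‖ ≤ c * D := mul_le_mul_of_nonneg_left h4 hc_pos.le
            _ = gap := by rw [hc]; field_simp
        rw [hf]
        simp only
        rw [h1, h2]
        linarith
    intro y hy
    rw [permutahedron_eq] at hy
    obtain ⟨x, hx, hfx⟩ := hconv.exists_ge_of_mem_convexHull (Set.subset_univ _) hy
    have := le_trans hfx (hV x hx)
    rw [hf] at this
    simp only at this
    linarith
  · refine ⟨1, one_pos, ?_⟩
    intro y hy
    have hall : ∀ σ : Equiv.Perm (Fin n), σ = ρ := by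
      intro σ
      by_contra hσ
      exact hne ⟨σ, Finset.mem_erase.2 ⟨hσ, Finset.mem_univ σ⟩⟩
    have hsub : verts n ⊆ {v} := by
      rintro x ⟨σ, hσ⟩
      have : x = v := by
        ext i
        rw [hσ i, hall σ, hvv i]
      simp [this]
    rw [permutahedron_eq] at hy
    have := convexHull_min hsub (convex_singleton v) hy
    rw [Set.mem_singleton_iff] at this
    rw [this]
    simp

end SoftRankAux

/-- Convergence of soft rank to hard rank as `ε → 0⁺`: for `s` with distinct entries, the
Euclidean projection of `-s/ε` onto the permutahedron converges to `rank s`. -/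
theorem softRank_tendsto_rank (n : ℕ) (s : EuclideanSpace ℝ (Fin n))
    (hs : Function.Injective s) (r : ℝ → EuclideanSpace ℝ (Fin n))
    (hr : ∀ ε : ℝ, 0 < ε → r ε ∈ permutahedron n ∧
      ∀ y ∈ permutahedron n, ‖r ε - (-(ε⁻¹ • s))‖ ≤ ‖y - (-(ε⁻¹ • s))‖) :
    Filter.Tendsto r (nhdsWithin 0 (Set.Ioi 0)) (nhds (rankVec s)) := by
  classical
  obtain ⟨c, hc_pos, hkey⟩ := SoftRankAux.gap_lemma hs
  set v : EuclideanSpace ℝ (Fin n) := rankVec s with hv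
  have hvmem : v ∈ permutahedron n := subset_convexHull ℝ _ (SoftRankAux.rankVec_mem hs)
  set δ : ℝ := c / ((n : ℝ) ^ 2 + 1) with hδ
  have hδ_pos : 0 < δ := by positivity
  have heq : ∀ ε ∈ Set.Ioo (0 : ℝ) δ, r ε = v := by
    rintro ε ⟨hε_pos, hε_lt⟩
    obtain ⟨hmem, hmin⟩ := hr ε hε_pos
    set z : EuclideanSpace ℝ (Fin n) := -(ε⁻¹ • s) with hz
    haveI : Nonempty ↑(permutahedron n) := ⟨⟨v, hvmem⟩⟩
    have hconvK : Convex ℝ (permutahedron n) := convex_convexHull ℝ _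
    have hinf : ‖z - r ε‖ = ⨅ w : permutahedron n, ‖z - w‖ := by
      apply le_antisymm
      · apply le_ciInf
        intro w
        rw [norm_sub_rev, norm_sub_rev z]
        exact hmin w w.2
      · have hbdd : BddBelow (Set.range fun w : permutahedron n => ‖z - (w : EuclideanSpace ℝ (Fin n))‖) := by
          refine ⟨0, ?_⟩
          rintro x ⟨w, rfl⟩
          exact norm_nonneg _
        exact ciInf_le hbdd ⟨r ε, hmem⟩
    have hproj := (norm_eq_iInf_iff_real_inner_le_zero hconvK hmem).mp hinf v hvmem
    -- hproj : ⟪z - r ε, v - r ε⟫_ℝ ≤ 0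
    have hexp : (inner ℝ (z - r ε) (v - r ε) : ℝ)
        = ε⁻¹ * ((inner ℝ s (r ε) : ℝ) - (inner ℝ s v : ℝ))
          - (inner ℝ (r ε) (v - r ε) : ℝ) := by
      rw [inner_sub_left, hz, inner_neg_left, real_inner_smul_left, inner_sub_right]
      ring
    have hCS : (inner ℝ (r ε) (v - r ε) : ℝ) ≤ (n : ℝ) ^ 2 * ‖v - r ε‖ := by
      calc (inner ℝ (r ε) (v - r ε) : ℝ) ≤ ‖r ε‖ * ‖v - r ε‖ := real_inner_le_norm _ _
        _ ≤ (n : ℝ) ^ 2 * ‖v - r ε‖ :=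
            mul_le_mul_of_nonneg_right (SoftRankAux.permutahedron_norm_le hmem) (norm_nonneg _)
    have hkey' : c * ‖r ε - v‖ ≤ (inner ℝ s (r ε) : ℝ) - (inner ℝ s v : ℝ) := hkey _ hmem
    have h1 : ε⁻¹ * (c * ‖r ε - v‖) ≤ (n : ℝ) ^ 2 * ‖r ε - v‖ := by
      rw [hexp] at hproj
      have h2 : ε⁻¹ * ((inner ℝ s (r ε) : ℝ) - (inner ℝ s v : ℝ))
          ≤ (n : ℝ) ^ 2 * ‖v - r ε‖ := by linarith
      rw [norm_sub_rev v] at h2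
      calc ε⁻¹ * (c * ‖r ε - v‖) ≤ ε⁻¹ * ((inner ℝ s (r ε) : ℝ) - (inner ℝ s v : ℝ)) :=
            mul_le_mul_of_nonneg_left hkey' (by positivity)
        _ ≤ (n : ℝ) ^ 2 * ‖r ε - v‖ := h2
    have ht : ‖r ε - v‖ = 0 := by
      by_contra hne
      have ht_pos : 0 < ‖r ε - v‖ := lt_of_le_of_ne (norm_nonneg _) (Ne.symm hne)
      have hεc : ε * ((n : ℝ) ^ 2 + 1) < c := by
        rw [hδ] at hε_lt
        exact (lt_div_iff₀ (by positivity)).mp hε_lt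
      have h3 : c * ‖r ε - v‖ ≤ ε * ((n : ℝ) ^ 2 * ‖r ε - v‖) := by
        have := mul_le_mul_of_nonneg_left h1 hε_pos.le
        rwa [← mul_assoc, mul_inv_cancel₀ hε_pos.ne', one_mul] at this
      nlinarith
    rw [← sub_eq_zero]
    exact norm_eq_zero.mp ht
  have hev : (fun _ : ℝ => v) =ᶠ[nhdsWithin 0 (Set.Ioi 0)] r := by
    filter_upwards [Ioo_mem_nhdsGT_of_mem (Set.mem_Ico.2 ⟨le_refl (0:ℝ), hδ_pos⟩)] with ε hε
    exact (heq ε hε).symm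
  exact Filter.Tendsto.congr' hev tendsto_const_nhds
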